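/- Let θ > 0, σ > 1 with θ > σ − 1, λ > 0, π ∈ (0,1], and x̃ > 0, and set m = σ/(σ−1). Then ∫₀^∞ ∫_{z₂}^∞ (x̃/z₁) · (min(m · x̃/z₁, x̃/z₂))^{−σ} · (1/π) · exp(−(λ/π) z₂^{−θ}) · (θ λ z₁^{−θ−1}) · (θ λ z₂^{−θ−1}) dz₁ dz₂ = [1 − σ/(1+θ) + (σ/(1+θ)) m^{−(1+θ)}] · Γ((1−σ+θ)/θ) · π · (λ x̃^{−θ} / π)^{(σ−1)/θ}, where Γ is the Gamma function. -/

import Mathlib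

open MeasureTheory Real Set intervalIntegral

lemma inner_calc (θ σ lam x z₂ : ℝ) (hθ : 0 < θ) (hσ : 1 < σ) (hθσ : σ - 1 < θ)
    (hlam : 0 < lam) (hx : 0 < x) (hz : 0 < z₂) :
    ∫ z₁ in Set.Ioi z₂, (x / z₁) * (min ((σ / (σ - 1)) * x / z₁) (x / z₂)) ^ (-σ) *
        (θ * lam * z₁ ^ (-θ - 1))
    = θ * lam * x ^ (1 - σ) *
      ((1 - (σ / (σ - 1)) ^ (-θ - 1)) / (θ + 1) + (σ / (σ - 1)) ^ (-θ - 1) / (θ + 1 - σ)) *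
      z₂ ^ (σ - 1 - θ) := by
  set m := σ / (σ - 1) with hm_def
  have hσ1 : 0 < σ - 1 := by linarith
  have hm1 : 1 < m := (one_lt_div hσ1).2 (by linarith)
  have hm0 : 0 < m := lt_trans one_pos hm1
  have hle : z₂ ≤ m * z₂ := le_mul_of_one_le_left hz.le hm1.le
  have hmz : 0 < m * z₂ := mul_pos hm0 hz
  have heq1 : EqOn (fun z₁ : ℝ => (x / z₁) * (min (m * x / z₁) (x / z₂)) ^ (-σ) *
      (θ * lam * z₁ ^ (-θ - 1)))
      (fun z₁ : ℝ => θ * lam * x ^ (1 - σ) * z₂ ^ σ * z₁ ^ (-θ - 2)) (Ioc z₂ (m * z₂)) := by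
    intro z₁ hz₁m
    have hz₁ : 0 < z₁ := lt_trans hz hz₁m.1
    have hmin : min (m * x / z₁) (x / z₂) = x / z₂ := by
      refine min_eq_right ((div_le_div_iff₀ hz hz₁).2 ?_)
      nlinarith [hz₁m.2]
    simp only [hmin]
    rw [div_rpow hx.le hz.le, Real.rpow_neg hz.le, div_inv_eq_mul,
      show (1:ℝ) - σ = 1 + -σ by ring, rpow_add hx, rpow_one,
      show -θ - 2 = -1 + (-θ - 1) by ring, rpow_add hz₁, rpow_neg_one, div_eq_mul_inv]
    ring
  have heq2 : EqOn (fun z₁ : ℝ => (x / z₁) * (min (m * x / z₁) (x / z₂)) ^ (-σ) *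
      (θ * lam * z₁ ^ (-θ - 1)))
      (fun z₁ : ℝ => θ * lam * x ^ (1 - σ) * m ^ (-σ) * z₁ ^ (σ - θ - 2)) (Ioi (m * z₂)) := by
    intro z₁ hz₁m
    have hz₁ : 0 < z₁ := lt_trans hmz hz₁m
    have hmin : min (m * x / z₁) (x / z₂) = m * x / z₁ := by
      refine min_eq_left ((div_le_div_iff₀ hz₁ hz).2 ?_)
      nlinarith [mem_Ioi.mp hz₁m]
    simp only [hmin]
    rw [div_rpow (by positivity) hz₁.le, mul_rpow hm0.le hx.le, Real.rpow_neg hz₁.le,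
      div_inv_eq_mul, show (1:ℝ) - σ = 1 + -σ by ring, rpow_add hx, rpow_one,
      show σ - θ - 2 = (-1 + σ) + (-θ - 1) by ring, rpow_add hz₁, rpow_add hz₁, rpow_neg_one,
      div_eq_mul_inv]
    ring
  have hint1 : IntegrableOn (fun z₁ : ℝ => (x / z₁) * (min (m * x / z₁) (x / z₂)) ^ (-σ) *
      (θ * lam * z₁ ^ (-θ - 1))) (Ioc z₂ (m * z₂)) := by
    refine IntegrableOn.congr_fun ?_ heq1.symm measurableSet_Ioc
    exact ((intervalIntegrable_rpow
      (Or.inr (notMem_uIcc_of_lt hz hmz))).1).const_mul _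
  have hint2 : IntegrableOn (fun z₁ : ℝ => (x / z₁) * (min (m * x / z₁) (x / z₂)) ^ (-σ) *
      (θ * lam * z₁ ^ (-θ - 1))) (Ioi (m * z₂)) := by
    refine IntegrableOn.congr_fun ?_ heq2.symm measurableSet_Ioi
    exact (integrableOn_Ioi_rpow_of_lt (by linarith) hmz).const_mul _
  rw [← Ioc_union_Ioi_eq_Ioi hle,
    setIntegral_union (Ioc_disjoint_Ioi le_rfl) measurableSet_Ioi hint1 hint2,
    setIntegral_congr_fun measurableSet_Ioc heq1,
    setIntegral_congr_fun measurableSet_Ioi heq2,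
    MeasureTheory.integral_const_mul, MeasureTheory.integral_const_mul,
    ← integral_of_le hle,
    integral_rpow (Or.inr ⟨by intro h; linarith [h], notMem_uIcc_of_lt hz hmz⟩),
    integral_Ioi_rpow_of_lt (by linarith) hmz,
    show -θ - 2 + 1 = -θ - 1 by ring, show σ - θ - 2 + 1 = σ - 1 - θ by ring,
    mul_rpow hm0.le hz.le, mul_rpow hm0.le hz.le]
  have hzz : z₂ ^ σ * z₂ ^ (-θ - 1) = z₂ ^ (σ - 1 - θ) := by
    rw [← rpow_add hz]; congr 1; ring
  have hmm : m ^ (-σ) * m ^ (σ - 1 - θ) = m ^ (-θ - 1) := by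
    rw [← rpow_add hm0]; congr 1; ring
  have hd1 : θ + 1 ≠ 0 := by positivity
  have hd2 : θ + 1 - σ ≠ 0 := by intro h; linarith
  calc θ * lam * x ^ (1 - σ) * z₂ ^ σ *
        ((m ^ (-θ - 1) * z₂ ^ (-θ - 1) - z₂ ^ (-θ - 1)) / (-θ - 1)) +
      θ * lam * x ^ (1 - σ) * m ^ (-σ) *
        (-(m ^ (σ - 1 - θ) * z₂ ^ (σ - 1 - θ)) / (σ - 1 - θ))
      = θ * lam * x ^ (1 - σ) * (z₂ ^ σ * z₂ ^ (-θ - 1)) * ((m ^ (-θ - 1) - 1) / (-θ - 1)) +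
        θ * lam * x ^ (1 - σ) * (m ^ (-σ) * m ^ (σ - 1 - θ)) *
          (-(z₂ ^ (σ - 1 - θ)) / (σ - 1 - θ)) := by ring
    _ = θ * lam * x ^ (1 - σ) * z₂ ^ (σ - 1 - θ) * ((m ^ (-θ - 1) - 1) / (-θ - 1)) +
        θ * lam * x ^ (1 - σ) * m ^ (-θ - 1) * (-(z₂ ^ (σ - 1 - θ)) / (σ - 1 - θ)) := by
          rw [hzz, hmm]
    _ = θ * lam * x ^ (1 - σ) *
          ((1 - m ^ (-θ - 1)) / (θ + 1) + m ^ (-θ - 1) / (θ + 1 - σ)) * z₂ ^ (σ - 1 - θ) := by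
          have h3 : σ - 1 - θ ≠ 0 := by intro h; linarith
          have h4 : (-θ - 1 : ℝ) ≠ 0 := by intro h; linarith
          have e1 : (m ^ (-θ - 1) - 1) / (-θ - 1) = (1 - m ^ (-θ - 1)) / (θ + 1) := by
            rw [div_eq_div_iff h4 hd1]; ring
          have e2 : (-(z₂ ^ (σ - 1 - θ))) / (σ - 1 - θ) = z₂ ^ (σ - 1 - θ) / (θ + 1 - σ) := by
            rw [div_eq_div_iff h3 hd2]; ring
          rw [e1, e2]; ring


/-- **Source production cost per unit of destination expenditure under Bertrand
competition.** A variety won by a source with Fréchet location `λ`, shape `θ`,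
trade share `p` and landed cost `x̃` sells at `min (m x̃ / z₁) (x̃ / z₂)` with
`m = σ/(σ-1)` and is produced at marginal cost `x̃ / z₁`; integrating the cost
times demand `price^{-σ}` against the joint density of `(z₁, z₂)` yields
`[1 - σ/(1+θ) + (σ/(1+θ)) m^{-(1+θ)}] Γ((1-σ+θ)/θ) p (λ x̃^{-θ}/p)^{(σ-1)/θ}`. -/
theorem cost_contribution_integral (θ σ lam p x : ℝ)
    (hθ : 0 < θ) (hσ : 1 < σ) (hθσ : σ - 1 < θ) (hlam : 0 < lam)
    (hp : p ∈ Set.Ioc (0 : ℝ) 1) (hx : 0 < x) :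
    (∫ z₂ in Set.Ioi (0 : ℝ), ∫ z₁ in Set.Ioi z₂,
        (x / z₁) * (min ((σ / (σ - 1)) * x / z₁) (x / z₂)) ^ (-σ) *
          ((1 / p) * Real.exp (-(lam / p) * z₂ ^ (-θ)) *
            (θ * lam * z₁ ^ (-θ - 1)) * (θ * lam * z₂ ^ (-θ - 1))))
      = (1 - σ / (1 + θ) + (σ / (1 + θ)) * (σ / (σ - 1)) ^ (-(1 + θ))) *
          Real.Gamma ((1 - σ + θ) / θ) * p * (lam * x ^ (-θ) / p) ^ ((σ - 1) / θ) := by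
  have hp0 : 0 < p := hp.1
  have hb : 0 < lam / p := div_pos hlam hp0
  set m := σ / (σ - 1) with hm_def
  set C : ℝ := (1 - m ^ (-θ - 1)) / (θ + 1) + m ^ (-θ - 1) / (θ + 1 - σ) with hC_def
  set K : ℝ := (1 / p) * (θ * lam) * (θ * lam * x ^ (1 - σ) * C) with hK_def
  set a : ℝ := (1 - σ + θ) / θ with ha_def
  have ha_pos : 0 < a := div_pos (by linarith) hθ
  -- Step 1: rewrite the outer integrand
  have houter : ∀ z₂ ∈ Set.Ioi (0:ℝ),
      (∫ z₁ in Set.Ioi z₂,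
        (x / z₁) * (min (m * x / z₁) (x / z₂)) ^ (-σ) *
          ((1 / p) * Real.exp (-(lam / p) * z₂ ^ (-θ)) *
            (θ * lam * z₁ ^ (-θ - 1)) * (θ * lam * z₂ ^ (-θ - 1))))
      = K * (z₂ ^ (σ - 2*θ - 2) * Real.exp (-(lam / p) * z₂ ^ (-θ))) := by
    intro z₂ hz₂
    have hz : 0 < z₂ := hz₂
    have hcomb : z₂ ^ (-θ - 1) * z₂ ^ (σ - 1 - θ) = z₂ ^ (σ - 2*θ - 2) := by
      rw [← Real.rpow_add hz]; congr 1; ring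
    calc (∫ z₁ in Set.Ioi z₂,
        (x / z₁) * (min (m * x / z₁) (x / z₂)) ^ (-σ) *
          ((1 / p) * Real.exp (-(lam / p) * z₂ ^ (-θ)) *
            (θ * lam * z₁ ^ (-θ - 1)) * (θ * lam * z₂ ^ (-θ - 1))))
        = ∫ z₁ in Set.Ioi z₂,
            ((1 / p) * Real.exp (-(lam / p) * z₂ ^ (-θ)) * (θ * lam * z₂ ^ (-θ - 1))) *
            ((x / z₁) * (min (m * x / z₁) (x / z₂)) ^ (-σ) * (θ * lam * z₁ ^ (-θ - 1))) := by
          refine setIntegral_congr_fun measurableSet_Ioi (fun z₁ _ => ?_)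
          ring
      _ = ((1 / p) * Real.exp (-(lam / p) * z₂ ^ (-θ)) * (θ * lam * z₂ ^ (-θ - 1))) *
            (θ * lam * x ^ (1 - σ) * C * z₂ ^ (σ - 1 - θ)) := by
          rw [MeasureTheory.integral_const_mul, inner_calc θ σ lam x z₂ hθ hσ hθσ hlam hx hz]
      _ = K * (z₂ ^ (σ - 2*θ - 2) * Real.exp (-(lam / p) * z₂ ^ (-θ))) := by
          rw [hK_def]
          linear_combination ((1 / p) * Real.exp (-(lam / p) * z₂ ^ (-θ)) * (θ * lam) *
            (θ * lam * x ^ (1 - σ) * C)) * hcomb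
  rw [setIntegral_congr_fun measurableSet_Ioi houter, MeasureTheory.integral_const_mul]
  -- Step 2: the Gamma integral
  have hgam : ∫ u in Set.Ioi (0:ℝ), u ^ a * Real.exp (-(lam / p) * u)
      = (lam / p) ^ (-(a + 1)) * Real.Gamma (a + 1) := by
    have h := integral_rpow_mul_exp_neg_mul_rpow (p := 1) (q := a) (b := lam / p)
      one_pos (by linarith) hb
    simp only [Real.rpow_one, div_one, one_div_one, mul_one, one_mul] at h
    rw [h]
  have hsub : ∫ z₂ in Set.Ioi (0:ℝ), z₂ ^ (σ - 2*θ - 2) * Real.exp (-(lam / p) * z₂ ^ (-θ))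
      = (1/θ) * ((lam / p) ^ (-(a + 1)) * Real.Gamma (a + 1)) := by
    rw [← hgam,
      ← integral_comp_rpow_Ioi (fun u => u ^ a * Real.exp (-(lam / p) * u))
        (p := -θ) (by simpa using hθ.ne'), ← MeasureTheory.integral_const_mul]
    refine setIntegral_congr_fun measurableSet_Ioi (fun t ht => ?_)
    have ht0 : (0:ℝ) < t := ht
    have h1 : |(-θ)| = θ := by rw [abs_neg, abs_of_pos hθ]
    have h2 : (t ^ (-θ)) ^ a = t ^ (σ - 1 - θ) := by
      rw [← Real.rpow_mul ht0.le]
      congr 1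
      rw [ha_def]
      field_simp
      ring
    rw [smul_eq_mul, h1, h2, show σ - 2*θ - 2 = (-θ - 1) + (σ - 1 - θ) by ring,
      Real.rpow_add ht0]
    field_simp
  rw [hsub, Real.Gamma_add_one ha_pos.ne']
  -- Step 3: final algebra
  have hr1 : (lam * x ^ (-θ) / p) ^ ((σ - 1) / θ) = (lam / p) ^ ((σ - 1) / θ) * x ^ (1 - σ) := by
    rw [show lam * x ^ (-θ) / p = (lam / p) * x ^ (-θ) by ring,
      Real.mul_rpow hb.le (Real.rpow_nonneg hx.le _), ← Real.rpow_mul hx.le,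
      show -θ * ((σ - 1) / θ) = 1 - σ by field_simp; ring]
  have hneg2 : (lam / p) ^ ((-2):ℝ) = p ^ 2 / lam ^ 2 := by
    rw [Real.rpow_neg hb.le, show (2:ℝ) = ((2:ℕ):ℝ) by norm_num, Real.rpow_natCast,
      div_pow, inv_div]
  have hr2 : (lam / p) ^ (-(a + 1)) = (lam / p) ^ ((σ - 1) / θ) * (p ^ 2 / lam ^ 2) := by
    rw [show -(a + 1) = (σ - 1) / θ + (-2) by rw [ha_def]; field_simp; ring,
      Real.rpow_add hb, hneg2]
  rw [hr2, hr1, hK_def, hC_def, ha_def, show -(1 + θ) = -θ - 1 by ring]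
  have hd1 : θ + 1 ≠ 0 := by positivity
  have hd2 : θ + 1 - σ ≠ 0 := by intro h; linarith
  have hd3 : (1:ℝ) + θ ≠ 0 := by positivity
  field_simp
  ring
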